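/- Let m ≥ 1, let O ⊆ ℝ^m be a nonempty open convex set, let ω : O → ℝ be convex and differentiable, let X ⊆ O be a nonempty compact convex set, and let α > 0 satisfy ω(x) − ω(y) − ⟨∇ω(y), x − y⟩ ≥ (α/2)‖x − y‖² for all x, y ∈ X. Let x ∈ X, E ∈ ℝ^m, t > 0, and suppose x⁺ ∈ X minimizes u ↦ ⟨tE − ∇ω(x), u⟩ + ω(u) over X. Then for every u ∈ X: t⟨E, x − u⟩ ≤ D_ω(u, x) − D_ω(u, x⁺) + t²‖E‖²/(2α). -/

import Mathlib

open scoped RealInnerProductSpace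

/-- The Bregman distance associated to a differentiable function `ω`. -/
noncomputable def bregman {m : ℕ} (ω : EuclideanSpace ℝ (Fin m) → ℝ)
    (u v : EuclideanSpace ℝ (Fin m)) : ℝ :=
  ω u - ω v - ⟪gradient ω v, u - v⟫

theorem comirror_single_step {m : ℕ} (hm : 1 ≤ m)
    (O : Set (EuclideanSpace ℝ (Fin m))) (hOne : O.Nonempty) (hOopen : IsOpen O)
    (hOconv : Convex ℝ O)
    (ω : EuclideanSpace ℝ (Fin m) → ℝ) (hωconv : ConvexOn ℝ O ω)
    (hωdiff : ∀ x ∈ O, DifferentiableAt ℝ ω x)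
    (X : Set (EuclideanSpace ℝ (Fin m))) (hXne : X.Nonempty) (hXcpt : IsCompact X)
    (hXconv : Convex ℝ X) (hXO : X ⊆ O)
    (α : ℝ) (hα : 0 < α)
    (hstrong : ∀ x ∈ X, ∀ y ∈ X,
      ω x - ω y - ⟪gradient ω y, x - y⟫ ≥ α / 2 * ‖x - y‖ ^ 2)
    (x : EuclideanSpace ℝ (Fin m)) (hx : x ∈ X)
    (E : EuclideanSpace ℝ (Fin m)) (t : ℝ) (ht : 0 < t)
    (xp : EuclideanSpace ℝ (Fin m)) (hxp : xp ∈ X)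
    (hmin : ∀ u ∈ X,
      ⟪t • E - gradient ω x, xp⟫ + ω xp ≤ ⟪t • E - gradient ω x, u⟫ + ω u) :
    ∀ u ∈ X, t * ⟪E, x - u⟫ ≤
      bregman ω u x - bregman ω u xp + t ^ 2 * ‖E‖ ^ 2 / (2 * α) := by
  intro u hu
  have hdxp : DifferentiableAt ℝ ω xp := hωdiff xp (hXO hxp)
  -- first-order optimality
  have hopt : 0 ≤ ⟪t • E - gradient ω x, u - xp⟫ + ⟪gradient ω xp, u - xp⟫ := by
    set c := t • E - gradient ω x with hc
    set d := u - xp with hd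
    set g : ℝ → ℝ := fun s => ⟪c, xp + s • d⟫ + ω (xp + s • d) with hg
    have hline : HasDerivAt (fun s : ℝ => xp + s • d) d 0 := by
      simpa using ((hasDerivAt_id (0 : ℝ)).smul_const d).const_add xp
    have hωpart : HasDerivAt (fun s : ℝ => ω (xp + s • d)) ⟪gradient ω xp, d⟫ 0 := by
      have h2 : HasFDerivAt ω ((InnerProductSpace.toDual ℝ _) (gradient ω xp))
          (xp + (0 : ℝ) • d) := by
        simpa using hdxp.hasGradientAt.hasFDerivAt
      simpa [Function.comp_def] using h2.comp_hasDerivAt 0 hline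
    have hinpart : HasDerivAt (fun s : ℝ => ⟪c, xp + s • d⟫) ⟪c, d⟫ 0 := by
      have heq : (fun s : ℝ => ⟪c, xp + s • d⟫) = fun s => ⟪c, xp⟫ + s * ⟪c, d⟫ := by
        funext s; rw [inner_add_right, real_inner_smul_right]
      rw [heq]
      simpa using ((hasDerivAt_id (0 : ℝ)).mul_const ⟪c, d⟫).const_add ⟪c, xp⟫
    have hgder : HasDerivAt g (⟪c, d⟫ + ⟪gradient ω xp, d⟫) 0 := hinpart.add hωpart
    have hmem : ∀ s ∈ Set.Icc (0 : ℝ) 1, xp + s • d ∈ X := by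
      intro s hs
      have h1 : (1 - s) • xp + s • u ∈ X :=
        hXconv hxp hu (by linarith [hs.2]) hs.1 (by ring)
      have h2 : xp + s • d = (1 - s) • xp + s • u := by
        rw [hd]; module
      rwa [h2]
    have hge : ∀ s ∈ Set.Icc (0 : ℝ) 1, g 0 ≤ g s := by
      intro s hs
      have := hmin (xp + s • d) (hmem s hs)
      simpa [hg] using this
    have hslope : Filter.Tendsto (slope g 0) (nhdsWithin 0 (Set.Ioi 0))
        (nhds (⟪c, d⟫ + ⟪gradient ω xp, d⟫)) := by
      have h' := hgder.hasDerivWithinAt (s := Set.Ioi (0 : ℝ))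
      rw [hasDerivWithinAt_iff_tendsto_slope] at h'
      have : Set.Ioi (0 : ℝ) \ {0} = Set.Ioi 0 := by
        apply Set.diff_singleton_eq_self; simp
      rwa [this] at h'
    refine ge_of_tendsto hslope ?_
    filter_upwards [Ioo_mem_nhdsGT_of_mem (Set.mem_Ico.mpr ⟨le_refl 0, one_pos⟩)] with s hs
    have hgs := hge s ⟨le_of_lt hs.1, le_of_lt hs.2⟩
    have hsl : slope g 0 s = (g s - g 0) / s := by simp [slope_def_field]
    rw [hsl]
    exact div_nonneg (by linarith) (le_of_lt hs.1)
  -- expand optimality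
  have key1 : ⟪gradient ω x, u - xp⟫ - ⟪gradient ω xp, u - xp⟫ ≤ t * ⟪E, u - xp⟫ := by
    have hexp : ⟪t • E - gradient ω x, u - xp⟫
        = t * ⟪E, u - xp⟫ - ⟪gradient ω x, u - xp⟫ := by
      rw [inner_sub_left, real_inner_smul_left]
    linarith [hopt, hexp ▸ hopt]
  -- Cauchy-Schwarz + AM-GM
  have hcs : t * ⟪E, x - xp⟫ ≤ t * (‖E‖ * ‖x - xp‖) :=
    mul_le_mul_of_nonneg_left (real_inner_le_norm E (x - xp)) (le_of_lt ht)
  have hamgm : t * (‖E‖ * ‖x - xp‖) ≤ α / 2 * ‖x - xp‖ ^ 2 + t ^ 2 * ‖E‖ ^ 2 / (2 * α) := by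
    have h := sq_nonneg (t * ‖E‖ - α * ‖x - xp‖)
    have hα' : 0 < 2 * α := by linarith
    rw [← sub_nonneg]
    have : α / 2 * ‖x - xp‖ ^ 2 + t ^ 2 * ‖E‖ ^ 2 / (2 * α) - t * (‖E‖ * ‖x - xp‖)
        = (t * ‖E‖ - α * ‖x - xp‖) ^ 2 / (2 * α) := by field_simp; ring
    rw [this]
    positivity
  have hst : α / 2 * ‖xp - x‖ ^ 2 ≤ ω xp - ω x - ⟪gradient ω x, xp - x⟫ :=
    hstrong xp hxp x hx
  have hnrm : ‖x - xp‖ = ‖xp - x‖ := norm_sub_rev x xp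
  have h1 : ⟪E, x - u⟫ = ⟪E, x - xp⟫ - ⟪E, u - xp⟫ := by
    simp only [inner_sub_right]; ring
  have h2 : ⟪gradient ω x, u - x⟫
      = ⟪gradient ω x, u - xp⟫ + ⟪gradient ω x, xp - x⟫ := by
    simp only [inner_sub_right]; ring
  simp only [bregman]
  rw [h1]
  rw [hnrm] at hcs hamgm
  nlinarith [key1, hcs, hamgm, hst, h2]
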